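/- arXiv:1601.05487 — 2 statements merged into one kernel-verified Lean document; each statement's English description precedes it below -/
import Mathlib

section
/- Let a < 0 and let P(z) = ∑_{n=0}^{2m} b_n z^n be a polynomial with real coefficients. Write e^{az²}·P(z) = ∑_{n=0}^∞ a_n z^n. Then there exists n₀ ∈ ℕ such that a_{n-1}·a_{n+1} ≤ 0 for every n > n₀. -/
open Filter Topology

noncomputable def gaussCoeff (a : ℝ) (m : ℕ) : ℝ :=
  if Even m then a ^ (m / 2) / (m / 2).factorial else 0

noncomputable def prodCoeff (a : ℝ) (P : Polynomial ℝ) (n : ℕ) : ℝ :=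
  ∑ j ∈ Finset.range (P.natDegree + 1),
    (if j ≤ n then P.coeff j * gaussCoeff a (n - j) else 0)

lemma hasSum_gauss (a : ℝ) (z : ℂ) :
    HasSum (fun m => (gaussCoeff a m : ℂ) * z ^ m) (Complex.exp (a * z ^ 2)) := by
  have h0 : HasSum (fun k : ℕ => ((a : ℂ) * z ^ 2) ^ k / k.factorial)
      (Complex.exp (a * z ^ 2)) := by
    rw [Complex.exp_eq_exp_ℂ]
    exact NormedSpace.expSeries_div_hasSum_exp _
  have hinj : Function.Injective (fun k : ℕ => 2 * k) := fun x y h => by simpa using h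
  refine (hinj.hasSum_iff ?_).mp ?_
  · intro m hm
    have : ¬ Even m := by
      simp only [Set.mem_range] at hm
      rw [Nat.even_iff]
      intro h; exact hm ⟨m / 2, by omega⟩
    simp [gaussCoeff, this]
  · refine h0.congr_fun fun k => ?_
    simp only [Function.comp, gaussCoeff, even_two_mul k, if_pos,
      Nat.mul_div_cancel_left k (by norm_num : 0 < 2)]
    push_cast
    rw [mul_pow, pow_mul]
    ring

lemma hasSum_prod (a : ℝ) (P : Polynomial ℝ) (z : ℂ) :
    HasSum (fun n => (prodCoeff a P n : ℂ) * z ^ n)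
      (Complex.exp (a * z ^ 2) * Polynomial.aeval z P) := by
  have key : ∀ j : ℕ, HasSum
      (fun n => (if j ≤ n then ((P.coeff j : ℂ) * (gaussCoeff a (n - j) : ℂ)) else 0) * z ^ n)
      ((P.coeff j : ℂ) * z ^ j * Complex.exp (a * z ^ 2)) := by
    intro j
    have h1 := (hasSum_gauss a z).mul_left ((P.coeff j : ℂ) * z ^ j)
    have hinj : Function.Injective (fun m : ℕ => m + j) := fun x y h => by simpa using h
    refine (hinj.hasSum_iff ?_).mp ?_
    · intro m hm
      have hj : ¬ j ≤ m := by
        simp only [Set.mem_range] at hm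
        intro h; exact hm ⟨m - j, by omega⟩
      simp [hj]
    · refine h1.congr_fun fun m => ?_
      simp only [Function.comp]
      rw [if_pos (Nat.le_add_left j m), Nat.add_sub_cancel]
      ring
  have hs := hasSum_sum (f := fun j n =>
      (if j ≤ n then ((P.coeff j : ℂ) * (gaussCoeff a (n - j) : ℂ)) else 0) * z ^ n)
    (s := Finset.range (P.natDegree + 1)) (fun j _ => key j)
  have hL : ∀ n, (prodCoeff a P n : ℂ) * z ^ n
      = ∑ j ∈ Finset.range (P.natDegree + 1),
        (if j ≤ n then ((P.coeff j : ℂ) * (gaussCoeff a (n - j) : ℂ)) else 0) * z ^ n := by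
    intro n
    rw [prodCoeff]
    push_cast
    rw [Finset.sum_mul]
    exact Finset.sum_congr rfl fun j _ => by rw [apply_ite (fun x : ℝ => (x : ℂ))]; push_cast; rfl
  have hR : ∑ j ∈ Finset.range (P.natDegree + 1),
      (P.coeff j : ℂ) * z ^ j * Complex.exp (a * z ^ 2)
      = Complex.exp (a * z ^ 2) * Polynomial.aeval z P := by
    rw [Polynomial.aeval_eq_sum_range, Finset.mul_sum]
    refine Finset.sum_congr rfl fun j _ => ?_
    rw [Algebra.smul_def]
    simp [Algebra.algebraMap_eq_smul_one]
    ring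
  rw [hR] at hs
  exact hs.congr_fun fun n => by rw [hL n]

lemma coeff_unique {C : ℕ → ℂ} (h : ∀ z : ℂ, HasSum (fun n => C n * z ^ n) 0) :
    ∀ n, C n = 0 := by
  have htend : Tendsto (fun n => ‖C n‖) atTop (𝓝 0) := by
    have := ((h 1).summable.tendsto_atTop_zero).norm
    simpa using this
  obtain ⟨M, hM⟩ := htend.bddAbove_range
  set p := FormalMultilinearSeries.ofScalars ℂ C with hp
  have hnorm : ∀ n, ‖p n‖ ≤ ‖C n‖ := by
    intro n
    rw [hp, FormalMultilinearSeries.ofScalars_norm]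
  have hrad : (1 : ENNReal) ≤ p.radius := by
    have := p.le_radius_of_bound M (r := 1) (fun n => by
      simpa using (hnorm n).trans (hM (Set.mem_range_self n)))
    simpa using this
  have hball : HasFPowerSeriesOnBall 0 p 0 1 :=
    { r_le := hrad
      r_pos := one_pos
      hasSum := by
        intro y _
        have h2 : (fun n => p n fun _ => y) = fun n => C n * y ^ n := by
          funext n
          rw [hp, FormalMultilinearSeries.ofScalars_apply_eq, smul_eq_mul]
        rw [h2]
        simpa using h y }
  have hzero : p = 0 := hball.hasFPowerSeriesAt.eq_zero
  intro n
  have := (FormalMultilinearSeries.ofScalars_series_eq_zero ℂ).mp hzero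
  exact congrFun this n

lemma tendsto_ratio (a : ℝ) (ha : a ≠ 0) (P : Polynomial ℝ) (D : ℕ)
    (hD : D ∈ Finset.range (P.natDegree + 1))
    (hmax : ∀ j ∈ Finset.range (P.natDegree + 1), P.coeff j ≠ 0 → j % 2 = D % 2 → j ≤ D) :
    Tendsto (fun k => prodCoeff a P (D + 2 * k) * (k.factorial : ℝ) / a ^ k)
      atTop (𝓝 (P.coeff D)) := by
  have hg : ∀ k, prodCoeff a P (D + 2 * k) * (k.factorial : ℝ) / a ^ k
      = ∑ j ∈ Finset.range (P.natDegree + 1),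
          (if j ≤ D + 2 * k then P.coeff j * gaussCoeff a (D + 2 * k - j) else 0)
            * (k.factorial : ℝ) / a ^ k := by
    intro k; rw [prodCoeff, Finset.sum_mul, Finset.sum_div]
  have hsum : ∑ j ∈ Finset.range (P.natDegree + 1), (if j = D then P.coeff D else 0)
      = P.coeff D := by
    rw [Finset.sum_ite_eq' _ D (fun _ => P.coeff D), if_pos hD]
  have main : Tendsto (fun k => ∑ j ∈ Finset.range (P.natDegree + 1),
      (if j ≤ D + 2 * k then P.coeff j * gaussCoeff a (D + 2 * k - j) else 0)
        * (k.factorial : ℝ) / a ^ k) atTop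
      (𝓝 (∑ j ∈ Finset.range (P.natDegree + 1), (if j = D then P.coeff D else 0))) := by
    refine tendsto_finset_sum _ fun j hj => ?_
    by_cases hb : P.coeff j = 0
    · have h1 : (if j = D then P.coeff D else 0) = 0 := by
        split_ifs with h
        · rw [← h]; exact hb
        · rfl
      rw [h1]
      simp only [hb, zero_mul, ite_self, zero_div]
      exact tendsto_const_nhds
    · by_cases hpar : j % 2 = D % 2
      · have hjD : j ≤ D := hmax j hj hb hpar
        rcases eq_or_lt_of_le hjD with heq | hlt
        · subst heq
          rw [if_pos rfl]
          have hval : ∀ k : ℕ, (if j ≤ j + 2 * k then P.coeff j * gaussCoeff a (j + 2 * k - j) else 0)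
              * (k.factorial : ℝ) / a ^ k = P.coeff j := by
            intro k
            rw [if_pos (Nat.le_add_right j (2 * k))]
            have h2 : j + 2 * k - j = 2 * k := by omega
            rw [h2, gaussCoeff, if_pos (even_two_mul k),
              Nat.mul_div_cancel_left k (by norm_num : 0 < 2)]
            have hk : (k.factorial : ℝ) ≠ 0 := Nat.cast_ne_zero.mpr k.factorial_ne_zero
            field_simp
          exact Tendsto.congr (fun k => (hval k).symm) tendsto_const_nhds
        · have hjne : j ≠ D := Nat.ne_of_lt hlt
          rw [if_neg hjne]
          set m := (D - j) / 2 with hm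
          have hm1 : 1 ≤ m := by omega
          have harg : ∀ k : ℕ, D + 2 * k - j = 2 * (m + k) := by intro k; omega
          have hval : ∀ k : ℕ, (if j ≤ D + 2 * k then P.coeff j * gaussCoeff a (D + 2 * k - j) else 0)
              * (k.factorial : ℝ) / a ^ k
              = P.coeff j * a ^ m * ((k.factorial : ℝ) / ((m + k).factorial : ℝ)) := by
            intro k
            rw [if_pos (by omega), harg k, gaussCoeff, if_pos (even_two_mul _),
              Nat.mul_div_cancel_left _ (by norm_num : 0 < 2)]
            have hk : ((m + k).factorial : ℝ) ≠ 0 := Nat.cast_ne_zero.mpr (m + k).factorial_ne_zero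
            have hak : a ^ k ≠ 0 := pow_ne_zero _ ha
            field_simp
            ring
          have hbound : Tendsto (fun k : ℕ => |P.coeff j * a ^ m| * (1 / ((k : ℝ) + 1)))
              atTop (𝓝 0) := by
            have := tendsto_one_div_add_atTop_nhds_zero_nat.const_mul (|P.coeff j * a ^ m|)
            simpa using this
          refine squeeze_zero_norm (fun k => ?_) hbound
          rw [hval k]
          rw [Real.norm_eq_abs, abs_mul, abs_div]
          have hfk : |(k.factorial : ℝ)| = (k.factorial : ℝ) := abs_of_pos (by positivity)
          have hfmk : |((m + k).factorial : ℝ)| = ((m + k).factorial : ℝ) := abs_of_pos (by positivity)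
          rw [hfk, hfmk]
          have hdivle : (k.factorial : ℝ) / ((m + k).factorial : ℝ) ≤ 1 / ((k : ℝ) + 1) := by
            rw [div_le_div_iff₀ (by positivity) (by positivity)]
            have : (k + 1).factorial ≤ (m + k).factorial :=
              Nat.factorial_le (by omega)
            calc (k.factorial : ℝ) * ((k : ℝ) + 1) = ((k + 1).factorial : ℝ) := by
                  rw [Nat.factorial_succ]; push_cast; ring
              _ ≤ ((m + k).factorial : ℝ) := Nat.cast_le.mpr this
              _ = 1 * ((m + k).factorial : ℝ) := by ring
          exact mul_le_mul_of_nonneg_left hdivle (abs_nonneg _)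
      · have hjne : j ≠ D := fun h => hpar (h ▸ rfl)
        rw [if_neg hjne]
        have hval : ∀ k : ℕ, (if j ≤ D + 2 * k then P.coeff j * gaussCoeff a (D + 2 * k - j) else 0)
            * (k.factorial : ℝ) / a ^ k = 0 := by
          intro k
          split_ifs with h
          · have hodd : ¬ Even (D + 2 * k - j) := by
              rw [Nat.even_iff]; omega
            rw [gaussCoeff, if_neg hodd, mul_zero, zero_mul, zero_div]
          · rw [zero_mul, zero_div]
        exact Tendsto.congr (fun k => (hval k).symm) tendsto_const_nhds
  rw [hsum] at main
  exact Tendsto.congr (fun k => (hg k).symm) main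

lemma sign_helper {x b : ℝ} (h : |x - b| < |b|) : 0 < x * b := by
  rcases abs_lt.mp h with ⟨h1, h2⟩
  rcases lt_trichotomy b 0 with hb | hb | hb
  · rw [abs_of_neg hb] at h1 h2; nlinarith
  · exfalso; rw [hb] at h; simp at h; exact absurd h (not_lt.mpr (abs_nonneg x))
  · rw [abs_of_pos hb] at h1 h2; nlinarith

lemma parity_lemma (a : ℝ) (ha : a < 0) (P : Polynomial ℝ) (r : ℕ) :
    ∃ N : ℕ, ∀ n, N ≤ n → n % 2 = r → prodCoeff a P n * prodCoeff a P (n + 2) ≤ 0 := by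
  by_cases hcl : ∀ j ∈ Finset.range (P.natDegree + 1), j % 2 = r → P.coeff j = 0
  · refine ⟨0, fun n _ hn => ?_⟩
    have hz : prodCoeff a P n = 0 := by
      rw [prodCoeff]; apply Finset.sum_eq_zero; intro j hj
      split_ifs with hle
      · by_cases hpar : j % 2 = r
        · rw [hcl j hj hpar, zero_mul]
        · have hodd : ¬ Even (n - j) := by rw [Nat.even_iff]; omega
          rw [gaussCoeff, if_neg hodd, mul_zero]
      · rfl
    rw [hz, zero_mul]
  · push_neg at hcl
    set S := (Finset.range (P.natDegree + 1)).filter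
      (fun j => P.coeff j ≠ 0 ∧ j % 2 = r) with hS
    have hSne : S.Nonempty := by
      obtain ⟨j, hj1, hj2, hj3⟩ := hcl
      exact ⟨j, by simp [hS, Finset.mem_range.mp hj1, hj3, hj2, Finset.mem_filter, hj1]⟩
    set D := S.max' hSne with hD
    have hDS : D ∈ S := S.max'_mem hSne
    rw [hS, Finset.mem_filter] at hDS
    have hDrange := hDS.1
    have hbD := hDS.2.1
    have hDr := hDS.2.2
    have hmax : ∀ j ∈ Finset.range (P.natDegree + 1), P.coeff j ≠ 0 → j % 2 = D % 2 → j ≤ D := by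
      intro j hj hbj hparj
      exact S.le_max' j (by rw [hS, Finset.mem_filter]; exact ⟨hj, hbj, by omega⟩)
    have htend := tendsto_ratio a (ne_of_lt ha) P D hDrange hmax
    have hev : ∀ᶠ k in atTop,
        prodCoeff a P (D + 2 * k) * (k.factorial : ℝ) / a ^ k ∈
          Metric.ball (P.coeff D) |P.coeff D| :=
      htend (Metric.ball_mem_nhds _ (abs_pos.mpr hbD))
    obtain ⟨K, hK⟩ := eventually_atTop.mp hev
    have hsign : ∀ k, K ≤ k → 0 < prodCoeff a P (D + 2 * k) * P.coeff D * a ^ k := by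
      intro k hk
      have h1 := hK k hk
      rw [Metric.mem_ball, Real.dist_eq] at h1
      have h2 := sign_helper h1
      have hak : a ^ k ≠ 0 := pow_ne_zero _ (ne_of_lt ha)
      have hfk : (0:ℝ) < k.factorial := by positivity
      have h4 : (0:ℝ) < (a ^ k) ^ 2 / k.factorial :=
        div_pos (pow_two_pos_of_ne_zero hak) hfk
      have h3 : (prodCoeff a P (D + 2 * k) * (k.factorial : ℝ) / a ^ k * P.coeff D)
          * ((a ^ k) ^ 2 / k.factorial)
          = prodCoeff a P (D + 2 * k) * P.coeff D * a ^ k := by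
        field_simp
      calc (0:ℝ) < (prodCoeff a P (D + 2 * k) * (k.factorial : ℝ) / a ^ k * P.coeff D)
          * ((a ^ k) ^ 2 / k.factorial) := mul_pos h2 h4
        _ = _ := h3
    refine ⟨D + 2 * K, fun n hn hnr => ?_⟩
    set k := (n - D) / 2 with hk
    have hDr2 : D % 2 = r := hDr
    have hn1 : n = D + 2 * k := by omega
    have hn2 : n + 2 = D + 2 * (k + 1) := by omega
    have h1 := hsign k (by omega)
    have h2 := hsign (k + 1) (by omega)
    rw [← hn1] at h1
    rw [← hn2] at h2
    have hprod := mul_pos h1 h2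
    have heq : (prodCoeff a P n * P.coeff D * a ^ k)
        * (prodCoeff a P (n + 2) * P.coeff D * a ^ (k + 1))
        = (prodCoeff a P n * prodCoeff a P (n + 2))
          * ((P.coeff D) ^ 2 * ((a ^ k) ^ 2 * a)) := by
      rw [pow_succ]; ring
    have hneg : (P.coeff D) ^ 2 * ((a ^ k) ^ 2 * a) < 0 := by
      have hak : a ^ k ≠ 0 := pow_ne_zero _ (ne_of_lt ha)
      exact mul_neg_of_pos_of_neg (pow_two_pos_of_ne_zero hbD)
        (mul_neg_of_pos_of_neg (pow_two_pos_of_ne_zero hak) ha)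
    rw [heq] at hprod
    nlinarith [hprod, hneg]


theorem sign_condition_of_gaussian_times_polynomial (a : ℝ) (ha : a < 0)
    (P : Polynomial ℝ) (A : ℕ → ℝ)
    (hA : ∀ z : ℂ, HasSum (fun n => (A n : ℂ) * z ^ n)
      (Complex.exp (a * z ^ 2) * Polynomial.aeval z P)) :
    ∃ n₀ : ℕ, ∀ n : ℕ, n₀ < n → A (n - 1) * A (n + 1) ≤ 0 := by
  have hAB : ∀ n, A n = prodCoeff a P n := by
    intro n
    have h : ∀ z : ℂ, HasSum (fun m => ((A m - prodCoeff a P m : ℝ) : ℂ) * z ^ m) 0 := by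
      intro z
      have h0 := (hA z).sub (hasSum_prod a P z)
      rw [sub_self] at h0
      refine h0.congr_fun fun m => ?_
      push_cast
      ring
    have h1 := coeff_unique h n
    have h2 := Complex.ofReal_eq_zero.mp h1
    linarith
  obtain ⟨N0, hN0⟩ := parity_lemma a ha P 0
  obtain ⟨N1, hN1⟩ := parity_lemma a ha P 1
  refine ⟨max N0 N1 + 1, fun n hn => ?_⟩
  have hn1 : n - 1 + 2 = n + 1 := by omega
  rw [hAB, hAB]
  rcases Nat.even_or_odd (n - 1) with he | ho
  · have h := hN0 (n - 1) (by omega) (Nat.even_iff.mp he)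
    rwa [hn1] at h
  · have h := hN1 (n - 1) (by omega) (Nat.odd_iff.mp ho)
    rwa [hn1] at h
end

section
/- Let a < 0 and let φ(z) = c z^k e^{a z²} ∏_{n=1}^∞ (1 - z²/x_n²) be an even or odd entire function with c ≠ 0, real nonzero x_n with ∑ 1/x_n² < ∞, and Maclaurin expansion φ(z) = ∑ a_n z^n. Then a_{n-1}·a_{n+1} ≤ 0 for every n ≥ 1. -/
open Filter Topology

namespace SignCondAux

open Finset

/-- Uniqueness of power series coefficients for entire-style expansions. -/
lemma coeff_unique {u v : ℕ → ℂ} {F : ℂ → ℂ}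
    (hu : ∀ z : ℂ, HasSum (fun n => u n * z ^ n) (F z))
    (hv : ∀ z : ℂ, HasSum (fun n => v n * z ^ n) (F z)) : u = v := by
  have key : ∀ (w : ℕ → ℂ), (∀ z : ℂ, HasSum (fun n => w n * z ^ n) (F z)) →
      HasFPowerSeriesAt F (FormalMultilinearSeries.ofScalars ℂ w) 0 := by
    intro w hw
    refine ⟨1, ?_, one_pos, ?_⟩
    · have hsummable : Summable w := by simpa using (hw 1).summable
      have hs2 : Summable fun n => ‖w n‖ := summable_norm_iff.mpr hsummable
      have : Summable fun n => ‖FormalMultilinearSeries.ofScalars ℂ w n‖ * (1 : ℝ) ^ n := by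
        refine (summable_congr fun n => ?_).mpr hs2
        rw [FormalMultilinearSeries.ofScalars_norm, one_pow, mul_one]
      simpa using FormalMultilinearSeries.le_radius_of_summable_norm _ (r := 1) this
    · intro y _
      have := hw y
      simp only [FormalMultilinearSeries.ofScalars_apply_eq, smul_eq_mul, zero_add]
      exact this
  have := (key u hu).eq_formalMultilinearSeries (key v hv)
  exact FormalMultilinearSeries.ofScalars_series_injective ℂ ℂ this

/-- If one factor is zero, the product has `HasProd` value 0. -/
lemma hasProd_zero_of_exists_zero {f : ℕ → ℂ} (h : ∃ n, f n = 0) : HasProd f 0 := by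
  obtain ⟨n₀, h₀⟩ := h
  have hev : ∀ᶠ s in (atTop : Filter (Finset ℕ)), ∏ i ∈ s, f i = 0 := by
    filter_upwards [eventually_ge_atTop ({n₀} : Finset ℕ)] with s hs
    exact Finset.prod_eq_zero (hs (Finset.mem_singleton_self n₀)) h₀
  exact (tendsto_const_nhds (x := (0 : ℂ))).congr' (hev.mono fun s hs => hs.symm)

lemma multipliable_one_add {u : ℕ → ℂ} (hu : Summable u) :
    Multipliable fun n => 1 + u n := by
  by_cases h : ∃ n, (1 : ℂ) + u n = 0
  · exact ⟨0, hasProd_zero_of_exists_zero h⟩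
  · push_neg at h
    refine Complex.multipliable_of_summable_log (f := fun n => 1 + u n) ?_
    have hnorm : Summable fun n => (3 / 2 : ℝ) * ‖u n‖ :=
      (summable_norm_iff.mpr hu).mul_left _
    refine Summable.of_norm_bounded_eventually_nat hnorm ?_
    have htz : Tendsto (fun n => ‖u n‖) atTop (𝓝 0) :=
      tendsto_zero_iff_norm_tendsto_zero.mp hu.tendsto_atTop_zero
    filter_upwards [htz.eventually_le_const (by norm_num : (0:ℝ) < 1/2)] with n hn
    exact Complex.norm_log_one_add_half_le_self hn

/-- Partial-product Maclaurin coefficients of `z^k e^{bz²} ∏_{i<N} (1 + z²/r i)`. -/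
noncomputable def S (b : ℝ) (k : ℕ) (r : ℕ → ℝ) : ℕ → ℕ → ℝ
  | 0, n => if k ≤ n ∧ 2 ∣ (n - k) then b ^ ((n - k) / 2) / Nat.factorial ((n - k) / 2) else 0
  | (N + 1), n => S b k r N n + (if 2 ≤ n then S b k r N (n - 2) / r N else 0)

variable {b : ℝ} {k : ℕ} {r : ℕ → ℝ}

lemma S_nonneg (hb : 0 ≤ b) (hr : ∀ i, 0 < r i) : ∀ N n, 0 ≤ S b k r N n := by
  intro N
  induction N with
  | zero =>
    intro n
    simp only [S]
    split
    · positivity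
    · exact le_refl _
  | succ N ih =>
    intro n
    simp only [S]
    have h1 := ih n
    have h2 : 0 ≤ (if 2 ≤ n then S b k r N (n - 2) / r N else 0) := by
      split
      · exact div_nonneg (ih _) (hr N).le
      · exact le_refl _
    linarith

lemma S_mono (hb : 0 ≤ b) (hr : ∀ i, 0 < r i) (n : ℕ) :
    Monotone fun N => S b k r N n := by
  apply monotone_nat_of_le_succ
  intro N
  simp only [S]
  have h2 : 0 ≤ (if 2 ≤ n then S b k r N (n - 2) / r N else 0) := by
    split
    · exact div_nonneg (S_nonneg hb hr N _) (hr N).le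
    · exact le_refl _
  linarith

lemma S_parity : ∀ N n, S b k r N n ≠ 0 → n % 2 = k % 2 := by
  intro N
  induction N with
  | zero =>
    intro n hn
    simp only [S] at hn
    rcases Classical.em (k ≤ n ∧ 2 ∣ (n - k)) with h | h
    · obtain ⟨hkn, m, hm⟩ := h
      omega
    · simp [h] at hn
  | succ N ih =>
    intro n hn
    simp only [S] at hn
    rcases Classical.em (S b k r N n = 0) with h0 | h0
    · rw [h0, zero_add] at hn
      have h2 : 2 ≤ n := by
        by_contra hc
        simp [hc] at hn
      rw [if_pos h2] at hn
      have hnz : S b k r N (n - 2) ≠ 0 := fun hz => hn (by rw [hz, zero_div])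
      have := ih _ hnz
      omega
    · exact ih n h0

lemma S_hasSum :
    ∀ N (z : ℂ), HasSum (fun n => ((S b k r N n : ℝ) : ℂ) * z ^ n)
      (z ^ k * Complex.exp ((b : ℂ) * z ^ 2) *
        ∏ i ∈ Finset.range N, (1 + z ^ 2 / ((r i : ℝ) : ℂ))) := by
  intro N
  induction N with
  | zero =>
    intro z
    rw [Finset.range_zero, Finset.prod_empty, mul_one]
    have he : HasSum (fun m => ((b : ℂ) * z ^ 2) ^ m / (Nat.factorial m : ℂ))
        (Complex.exp ((b : ℂ) * z ^ 2)) := by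
      rw [Complex.exp_eq_exp_ℂ]
      simpa [div_eq_inv_mul] using NormedSpace.exp_series_hasSum_exp' (𝕂 := ℂ) ((b : ℂ) * z ^ 2)
    have he' := he.mul_left (z ^ k)
    have hinj : Function.Injective (fun m : ℕ => k + 2 * m) := fun m₁ m₂ h => by
      simp only at h; omega
    have hzero : ∀ n, n ∉ Set.range (fun m : ℕ => k + 2 * m) →
        ((S b k r 0 n : ℝ) : ℂ) * z ^ n = 0 := by
      intro n hn
      have hcond : ¬(k ≤ n ∧ 2 ∣ (n - k)) := by
        intro ⟨h1, m, hm⟩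
        exact hn ⟨m, by show k + 2 * m = n; omega⟩
      simp [S, hcond]
    have hcomp : ((fun n => ((S b k r 0 n : ℝ) : ℂ) * z ^ n) ∘ (fun m : ℕ => k + 2 * m)) =
        fun m => z ^ k * (((b : ℂ) * z ^ 2) ^ m / (Nat.factorial m : ℂ)) := by
      funext m
      simp only [Function.comp_apply]
      have hcond : k ≤ k + 2 * m ∧ 2 ∣ (k + 2 * m - k) := ⟨Nat.le_add_right _ _, ⟨m, by omega⟩⟩
      have hm2 : (k + 2 * m - k) / 2 = m := by omega
      simp only [S, if_pos hcond, hm2]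
      push_cast
      rw [pow_add, pow_mul, mul_pow]
      ring
    refine (hinj.hasSum_iff hzero).mp ?_
    rw [hcomp]
    exact he'
  | succ N ih =>
    intro z
    have h1 := ih z
    set P := z ^ k * Complex.exp ((b : ℂ) * z ^ 2) *
      ∏ i ∈ Finset.range N, (1 + z ^ 2 / ((r i : ℝ) : ℂ)) with hP
    have h2 : HasSum (fun n => (((S b k r N n : ℝ) : ℂ) * z ^ n) * (z ^ 2 / ((r N : ℝ) : ℂ)))
        (P * (z ^ 2 / ((r N : ℝ) : ℂ))) := h1.mul_right _
    set gC : ℕ → ℂ := fun n =>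
      (if 2 ≤ n then ((S b k r N (n - 2) : ℝ) : ℂ) / ((r N : ℝ) : ℂ) else 0) * z ^ n with hgC
    have hshift : (fun m => gC (m + 2)) =
        fun m => (((S b k r N m : ℝ) : ℂ) * z ^ m) * (z ^ 2 / ((r N : ℝ) : ℂ)) := by
      funext m
      have : 2 ≤ m + 2 := by omega
      simp only [hgC, if_pos this, Nat.add_sub_cancel]
      rw [pow_add]
      ring
    have h3 : HasSum (fun m => gC (m + 2)) (P * (z ^ 2 / ((r N : ℝ) : ℂ))) := by
      rw [hshift]; exact h2
    have h4 : HasSum gC (P * (z ^ 2 / ((r N : ℝ) : ℂ)) + ∑ i ∈ Finset.range 2, gC i) :=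
      (hasSum_nat_add_iff 2).mp h3
    have hsum2 : ∑ i ∈ Finset.range 2, gC i = 0 := by
      norm_num [hgC, Finset.sum_range_succ]
    rw [hsum2, add_zero] at h4
    have h5 := h1.add h4
    have hfun : (fun n => ((S b k r (N + 1) n : ℝ) : ℂ) * z ^ n) =
        fun n => ((S b k r N n : ℝ) : ℂ) * z ^ n + gC n := by
      funext n
      simp only [S, hgC]
      by_cases h2n : 2 ≤ n
      · simp only [if_pos h2n]
        push_cast
        ring
      · simp only [if_neg h2n]
        push_cast
        ring
    rw [hfun]
    convert h5 using 1
    rw [Finset.prod_range_succ, hP]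
    ring

lemma S_hasSum_real (N : ℕ) (t : ℝ) :
    HasSum (fun n => S b k r N n * t ^ n)
      (t ^ k * Real.exp (b * t ^ 2) * ∏ i ∈ Finset.range N, (1 + t ^ 2 / r i)) := by
  have h := S_hasSum (b := b) (k := k) (r := r) N (t : ℂ)
  rw [← Complex.hasSum_ofReal]
  convert h using 1
  · funext n
    push_cast
    ring
  · push_cast [Complex.ofReal_exp]
    ring

lemma S_le_M (hb : 0 ≤ b) (hr : ∀ i, 0 < r i) (hsum' : Summable fun i => 1 / r i)
    {t : ℝ} (ht : 0 < t) (N n : ℕ) :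
    S b k r N n * t ^ n ≤ t ^ k * Real.exp (b * t ^ 2) * Real.exp (t ^ 2 * ∑' i, 1 / r i) := by
  have h := S_hasSum_real (b := b) (k := k) (r := r) N t
  have h1 : S b k r N n * t ^ n ≤
      t ^ k * Real.exp (b * t ^ 2) * ∏ i ∈ Finset.range N, (1 + t ^ 2 / r i) :=
    le_hasSum h n fun j _ => mul_nonneg (S_nonneg hb hr N j) (pow_nonneg ht.le j)
  refine h1.trans ?_
  have hprod : ∏ i ∈ Finset.range N, (1 + t ^ 2 / r i) ≤
      Real.exp (t ^ 2 * ∑' i, 1 / r i) := by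
    calc ∏ i ∈ Finset.range N, (1 + t ^ 2 / r i)
        ≤ ∏ i ∈ Finset.range N, Real.exp (t ^ 2 / r i) := by
          refine Finset.prod_le_prod (fun i _ => ?_) (fun i _ => ?_)
          · have h2 : 0 ≤ t ^ 2 / r i := div_nonneg (by positivity) (hr i).le
            linarith
          · have := Real.add_one_le_exp (t ^ 2 / r i)
            linarith
      _ = Real.exp (∑ i ∈ Finset.range N, t ^ 2 / r i) := (Real.exp_sum _ _).symm
      _ ≤ Real.exp (t ^ 2 * ∑' i, 1 / r i) := by
          apply Real.exp_le_exp.mpr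
          have heq : ∑ i ∈ Finset.range N, t ^ 2 / r i =
              t ^ 2 * ∑ i ∈ Finset.range N, 1 / r i := by
            rw [Finset.mul_sum]
            congr 1
            funext i
            ring
          rw [heq]
          have hle : ∑ i ∈ Finset.range N, 1 / r i ≤ ∑' i, 1 / r i :=
            Summable.sum_le_tsum _ (fun i _ => div_nonneg zero_le_one (hr i).le) hsum'
          nlinarith [sq_nonneg t]
  have hpos : 0 ≤ t ^ k * Real.exp (b * t ^ 2) := by positivity
  calc t ^ k * Real.exp (b * t ^ 2) * ∏ i ∈ Finset.range N, (1 + t ^ 2 / r i)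
      ≤ t ^ k * Real.exp (b * t ^ 2) * Real.exp (t ^ 2 * ∑' i, 1 / r i) :=
        mul_le_mul_of_nonneg_left hprod hpos

end SignCondAux

theorem sign_condition_of_symmetric_LP (a c : ℝ) (ha : a < 0) (hc : c ≠ 0) (k : ℕ)
    (x : ℕ → ℝ) (hx : ∀ n, x n ≠ 0) (hsum : Summable fun n => 1 / (x n) ^ 2)
    (A : ℕ → ℝ)
    (hA : ∀ z : ℂ, HasSum (fun n => (A n : ℂ) * z ^ n)
      ((c : ℂ) * z ^ k * Complex.exp (a * z ^ 2) * ∏' n : ℕ, (1 - z ^ 2 / (x n : ℂ) ^ 2))) :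
    ∀ n : ℕ, 1 ≤ n → A (n - 1) * A (n + 1) ≤ 0 := by
  classical
  set b : ℝ := -a with hbdef
  have hb : 0 ≤ b := by simp [hbdef]; linarith
  set r : ℕ → ℝ := fun i => (x i) ^ 2 with hrdef
  have hr : ∀ i, 0 < r i := fun i => by
    have := hx i
    positivity
  have hsum' : Summable fun i => 1 / r i := hsum
  set T : ℝ := ∑' i, 1 / r i with hT
  set M : ℝ → ℝ := fun t => t ^ k * Real.exp (b * t ^ 2) * Real.exp (t ^ 2 * T) with hM
  -- the limiting coefficients
  have hbdd : ∀ n, BddAbove (Set.range fun N => SignCondAux.S b k r N n) := by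
    intro n
    refine ⟨M 1, ?_⟩
    rintro y ⟨N, rfl⟩
    have := SignCondAux.S_le_M (k := k) hb hr hsum' (t := 1) one_pos N n
    simpa [hM, hT] using this
  set B : ℕ → ℝ := fun n => ⨆ N, SignCondAux.S b k r N n with hB
  have htendstoB : ∀ n, Tendsto (fun N => SignCondAux.S b k r N n) atTop (𝓝 (B n)) :=
    fun n => tendsto_atTop_ciSup (SignCondAux.S_mono (k := k) hb hr n) (hbdd n)
  have hSleB : ∀ N n, SignCondAux.S b k r N n ≤ B n :=
    fun N n => le_ciSup (hbdd n) N
  have hB0 : ∀ n, 0 ≤ B n := fun n =>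
    (SignCondAux.S_nonneg (k := k) hb hr 0 n).trans (hSleB 0 n)
  have hBparity : ∀ n, n % 2 ≠ k % 2 → B n = 0 := by
    intro n hn
    have hz : ∀ N, SignCondAux.S b k r N n = 0 := by
      intro N
      by_contra hne
      exact hn (SignCondAux.S_parity (b := b) (k := k) (r := r) N n hne)
    simp only [hB]
    simp [hz]
  have hBle : ∀ {t : ℝ}, 0 < t → ∀ n, B n * t ^ n ≤ M t := by
    intro t ht n
    have : B n ≤ M t / t ^ n := by
      refine ciSup_le fun N => ?_
      rw [le_div_iff₀ (by positivity)]
      exact SignCondAux.S_le_M (k := k) hb hr hsum' ht N n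
    calc B n * t ^ n ≤ (M t / t ^ n) * t ^ n :=
          mul_le_mul_of_nonneg_right this (by positivity)
      _ = M t := by field_simp
  -- HasSum of the limiting coefficients
  have hBsum : ∀ z : ℂ, HasSum (fun n => ((B n : ℝ) : ℂ) * z ^ n)
      (z ^ k * Complex.exp ((b : ℂ) * z ^ 2) * ∏' i, (1 + z ^ 2 / ((r i : ℝ) : ℂ))) := by
    intro z
    set t : ℝ := 2 * ‖z‖ + 1 with htdef
    have ht : 0 < t := by positivity
    have hzt : ‖z‖ / t < 1 := by
      rw [div_lt_one ht]
      have := norm_nonneg z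
      simp only [htdef]
      linarith
    have hzt0 : 0 ≤ ‖z‖ / t := by positivity
    have hgeom : Summable fun n : ℕ => M t * (‖z‖ / t) ^ n :=
      (summable_geometric_of_lt_one hzt0 hzt).mul_left _
    have hbound : ∀ (s : ℕ → ℝ), (∀ n, 0 ≤ s n) → (∀ n, s n * t ^ n ≤ M t) →
        ∀ n, ‖((s n : ℝ) : ℂ) * z ^ n‖ ≤ M t * (‖z‖ / t) ^ n := by
      intro s hs hsle n
      have h1 : ‖((s n : ℝ) : ℂ) * z ^ n‖ = s n * ‖z‖ ^ n := by
        rw [norm_mul, norm_pow, Complex.norm_real, Real.norm_eq_abs, abs_of_nonneg (hs n)]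
      rw [h1]
      have h2 : s n * ‖z‖ ^ n = (s n * t ^ n) * (‖z‖ / t) ^ n := by
        rw [div_pow]
        field_simp
      rw [h2]
      exact mul_le_mul_of_nonneg_right (hsle n) (by positivity)
    have hSb : ∀ N n, SignCondAux.S b k r N n * t ^ n ≤ M t := fun N n =>
      SignCondAux.S_le_M (k := k) hb hr hsum' ht N n
    -- summability of B-series
    have hBsummable : Summable fun n => ((B n : ℝ) : ℂ) * z ^ n := by
      refine Summable.of_norm_bounded hgeom ?_
      exact hbound B hB0 (fun n => hBle ht n)
    -- limit of partial sums
    have hlim1 : Tendsto (fun N => ∑' n, ((SignCondAux.S b k r N n : ℝ) : ℂ) * z ^ n)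
        atTop (𝓝 (∑' n, ((B n : ℝ) : ℂ) * z ^ n)) := by
      refine tendsto_tsum_of_dominated_convergence hgeom ?_ ?_
      · intro n
        exact ((Complex.continuous_ofReal.tendsto _).comp (htendstoB n)).mul_const _
      · filter_upwards with N
        exact hbound (fun n => SignCondAux.S b k r N n)
          (SignCondAux.S_nonneg (k := k) hb hr N) (hSb N)
    have htsumN : ∀ N, ∑' n, ((SignCondAux.S b k r N n : ℝ) : ℂ) * z ^ n =
        z ^ k * Complex.exp ((b : ℂ) * z ^ 2) *
          ∏ i ∈ Finset.range N, (1 + z ^ 2 / ((r i : ℝ) : ℂ)) :=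
      fun N => (SignCondAux.S_hasSum (b := b) (k := k) (r := r) N z).tsum_eq
    have hmult : Multipliable fun i => (1 : ℂ) + z ^ 2 / ((r i : ℝ) : ℂ) := by
      apply SignCondAux.multipliable_one_add
      have : Summable fun i => ((1 / r i : ℝ) : ℂ) :=
        (Complex.hasSum_ofReal).mpr hsum'.hasSum |>.summable
      have h2 := this.mul_left (z ^ 2)
      refine h2.congr fun i => ?_
      push_cast
      ring
    have hlim2 : Tendsto (fun N =>
        z ^ k * Complex.exp ((b : ℂ) * z ^ 2) *
          ∏ i ∈ Finset.range N, (1 + z ^ 2 / ((r i : ℝ) : ℂ))) atTop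
        (𝓝 (z ^ k * Complex.exp ((b : ℂ) * z ^ 2) *
          ∏' i, (1 + z ^ 2 / ((r i : ℝ) : ℂ)))) := by
      exact (hmult.hasProd.tendsto_prod_nat).const_mul _
    have hlim1' : Tendsto (fun N =>
        z ^ k * Complex.exp ((b : ℂ) * z ^ 2) *
          ∏ i ∈ Finset.range N, (1 + z ^ 2 / ((r i : ℝ) : ℂ))) atTop
        (𝓝 (∑' n, ((B n : ℝ) : ℂ) * z ^ n)) := by
      refine hlim1.congr fun N => htsumN N
    have := tendsto_nhds_unique hlim1' hlim2
    rw [hBsummable.hasSum_iff]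
    exact this
  -- transfer to the original function via z ↦ I z
  set F : ℂ → ℂ := fun z => (c : ℂ) * z ^ k * Complex.exp (a * z ^ 2) *
    ∏' n : ℕ, (1 - z ^ 2 / (x n : ℂ) ^ 2) with hF
  have hIk : (Complex.I : ℂ) ^ k ≠ 0 := pow_ne_zero _ Complex.I_ne_zero
  have hBF : ∀ z : ℂ, HasSum
      (fun n => ((c : ℂ) * Complex.I ^ n / Complex.I ^ k * (B n : ℝ)) * z ^ n) (F z) := by
    intro z
    have h := hBsum (Complex.I * z)
    have hval : (Complex.I * z) ^ k * Complex.exp ((b : ℂ) * (Complex.I * z) ^ 2) *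
        ∏' i, (1 + (Complex.I * z) ^ 2 / ((r i : ℝ) : ℂ)) =
        Complex.I ^ k * (z ^ k * Complex.exp ((a : ℂ) * z ^ 2) *
          ∏' n : ℕ, (1 - z ^ 2 / (x n : ℂ) ^ 2)) := by
      have hIz : (Complex.I * z) ^ 2 = -z ^ 2 := by
        rw [mul_pow, Complex.I_sq]
        ring
      have hb' : ((b : ℝ) : ℂ) = -((a : ℝ) : ℂ) := by
        rw [hbdef]; push_cast; ring
      have hprodeq : ∏' i, ((1 : ℂ) + (-z ^ 2) / ((r i : ℝ) : ℂ)) =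
          ∏' n : ℕ, (1 - z ^ 2 / (x n : ℂ) ^ 2) := by
        apply tprod_congr
        intro i
        rw [hrdef]
        push_cast
        ring
      rw [hIz, mul_pow]
      have harg : (b : ℂ) * -z ^ 2 = ((a : ℝ) : ℂ) * z ^ 2 := by rw [hb']; ring
      rw [harg, hprodeq]
      ring
    rw [hval] at h
    have h2 := h.mul_left ((c : ℂ) / Complex.I ^ k)
    have hfun : (fun n => (c : ℂ) / Complex.I ^ k *
        (((B n : ℝ) : ℂ) * (Complex.I * z) ^ n)) =
        fun n => ((c : ℂ) * Complex.I ^ n / Complex.I ^ k * (B n : ℝ)) * z ^ n := by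
      funext n
      rw [mul_pow]
      ring
    rw [hfun] at h2
    have hval2 : (c : ℂ) / Complex.I ^ k * (Complex.I ^ k *
        (z ^ k * Complex.exp ((a : ℂ) * z ^ 2) *
          ∏' n : ℕ, (1 - z ^ 2 / (x n : ℂ) ^ 2))) = F z := by
      rw [hF]
      field_simp
    rw [hval2] at h2
    exact h2
  -- uniqueness of coefficients
  have hcoeff : (fun n => ((A n : ℝ) : ℂ)) =
      fun n => (c : ℂ) * Complex.I ^ n / Complex.I ^ k * (B n : ℝ) :=
    SignCondAux.coeff_unique (F := F) (fun z => hA z) hBF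
  have hcoeff' : ∀ n, ((A n : ℝ) : ℂ) = (c : ℂ) * Complex.I ^ n / Complex.I ^ k * (B n : ℝ) :=
    fun n => congrFun hcoeff n
  -- final computation
  intro n hn
  by_cases hpar : n % 2 = k % 2
  · -- then (n-1) has parity different from k, so B (n-1) = 0 and A (n-1) = 0
    have hp : (n - 1) % 2 ≠ k % 2 := by omega
    have hBz : B (n - 1) = 0 := hBparity _ hp
    have : ((A (n - 1) : ℝ) : ℂ) = 0 := by
      rw [hcoeff' (n - 1), hBz]
      simp
    have hAz : A (n - 1) = 0 := by exact_mod_cast this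
    rw [hAz, zero_mul]
  · -- A(n-1)A(n+1) = -c² B(n-1)B(n+1)
    have hexp : Complex.I ^ (n - 1) * Complex.I ^ (n + 1) = ((-1 : ℂ)) ^ n := by
      rw [← pow_add]
      have h2n : (n - 1) + (n + 1) = 2 * n := by omega
      rw [h2n, pow_mul, Complex.I_sq]
    have hIk2 : Complex.I ^ k * Complex.I ^ k = ((-1 : ℂ)) ^ k := by
      rw [← pow_add, ← two_mul, pow_mul, Complex.I_sq]
    have hsign : ((-1 : ℂ)) ^ n = -(((-1 : ℂ)) ^ k) := by
      rcases Nat.even_or_odd n with he | ho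
      · have hko : Odd k := Nat.odd_iff.mpr (by have := Nat.even_iff.mp he; omega)
        rw [he.neg_one_pow, hko.neg_one_pow]
        ring
      · have hke : Even k := Nat.even_iff.mpr (by have := Nat.odd_iff.mp ho; omega)
        rw [ho.neg_one_pow, hke.neg_one_pow]
    have hm1 : ((-1 : ℂ)) ^ k ≠ 0 := pow_ne_zero _ (by norm_num)
    have key : ((A (n - 1) * A (n + 1) : ℝ) : ℂ) =
        (((-(c ^ 2 * (B (n - 1) * B (n + 1)))) : ℝ) : ℂ) := by
      push_cast
      rw [hcoeff' (n - 1), hcoeff' (n + 1)]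
      have hstep : ((c : ℂ) * Complex.I ^ (n - 1) / Complex.I ^ k * ((B (n - 1) : ℝ) : ℂ)) *
          ((c : ℂ) * Complex.I ^ (n + 1) / Complex.I ^ k * ((B (n + 1) : ℝ) : ℂ)) =
          (c : ℂ) ^ 2 * ((B (n - 1) : ℝ) : ℂ) * ((B (n + 1) : ℝ) : ℂ) *
            ((Complex.I ^ (n - 1) * Complex.I ^ (n + 1)) / (Complex.I ^ k * Complex.I ^ k)) := by
        ring
      rw [hstep, hexp, hIk2, hsign, neg_div, div_self hm1]
      ring
    have keyR : A (n - 1) * A (n + 1) = -(c ^ 2 * (B (n - 1) * B (n + 1))) := by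
      exact_mod_cast key
    rw [keyR]
    have : 0 ≤ c ^ 2 * (B (n - 1) * B (n + 1)) :=
      mul_nonneg (sq_nonneg c) (mul_nonneg (hB0 _) (hB0 _))
    linarith
end
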